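/- Let P(k−1) and R_n be symmetric positive definite, D a real matrix of compatible size, R_a = (D·P(k−1)·Dᵀ + R_n)⁻¹, and T = P(k−1)·Dᵀ·R_a. Then tr(P(k−1)) − tr(P(k−1) − T·D·P(k−1)) = tr(P(k−1)·Dᵀ·R_a·D·P(k−1)) ≥ λ_min(P(k−1))²·λ_min(R_a)·‖D‖_F², and in particular this difference is strictly positive whenever D ≠ 0. -/

import Mathlib

open Matrix

private lemma myPsdTraceNonneg {n : ℕ} {A : Matrix (Fin n) (Fin n) ℝ}
    (hA : A.PosSemidef) : 0 ≤ A.trace := by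
  rw [Matrix.trace]
  apply Finset.sum_nonneg
  intro i _
  exact hA.diag_nonneg

private lemma mySubSmulOnePsd {n : ℕ} {A : Matrix (Fin n) (Fin n) ℝ}
    (hA : A.IsHermitian) {c : ℝ} (hc : ∀ i, c ≤ hA.eigenvalues i) :
    (A - c • 1).PosSemidef := by
  set U : Matrix (Fin n) (Fin n) ℝ := (hA.eigenvectorUnitary : Matrix (Fin n) (Fin n) ℝ)
  have hUU : U * star U = 1 := Matrix.mem_unitaryGroup_iff.mp hA.eigenvectorUnitary.2
  have h1 : A - c • 1 = U * diagonal (fun i => hA.eigenvalues i - c) * star U := by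
    have hd : (diagonal (fun i => hA.eigenvalues i - c) : Matrix (Fin n) (Fin n) ℝ)
        = diagonal (RCLike.ofReal ∘ hA.eigenvalues) - c • 1 := by
      rw [smul_one_eq_diagonal, ← diagonal_sub]
      rfl
    rw [hd, Matrix.mul_sub, Matrix.sub_mul, ← (show A = U * diagonal (RCLike.ofReal ∘ hA.eigenvalues) * star U from hA.spectral_theorem)]
    congr 1
    rw [Matrix.mul_smul, Matrix.smul_mul, mul_one, hUU]
  rw [h1, Matrix.star_eq_conjTranspose]
  exact (posSemidef_diagonal_iff.mpr fun i => sub_nonneg.mpr (hc i)).mul_mul_conjTranspose_same U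

private lemma mySqSubSmulOnePsd {n : ℕ} {A : Matrix (Fin n) (Fin n) ℝ}
    (hA : A.IsHermitian) {c : ℝ} (hc : ∀ i, c ≤ hA.eigenvalues i ^ 2) :
    (A * A - c • 1).PosSemidef := by
  set U : Matrix (Fin n) (Fin n) ℝ := (hA.eigenvectorUnitary : Matrix (Fin n) (Fin n) ℝ)
  have hUU : U * star U = 1 := Matrix.mem_unitaryGroup_iff.mp hA.eigenvectorUnitary.2
  have hUU' : star U * U = 1 := Matrix.mem_unitaryGroup_iff'.mp hA.eigenvectorUnitary.2
  have hAA : A * A = U * diagonal (fun i => hA.eigenvalues i ^ 2) * star U := by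
    have hsp : A * A = (U * diagonal (RCLike.ofReal ∘ hA.eigenvalues) * star U)
        * (U * diagonal (RCLike.ofReal ∘ hA.eigenvalues) * star U) := by
      conv_lhs => rw [(show A = U * diagonal (RCLike.ofReal ∘ hA.eigenvalues) * star U from hA.spectral_theorem)]
    rw [hsp]
    have : (diagonal (fun i => hA.eigenvalues i ^ 2) : Matrix (Fin n) (Fin n) ℝ)
        = diagonal (RCLike.ofReal ∘ hA.eigenvalues) * diagonal (RCLike.ofReal ∘ hA.eigenvalues) := by
      rw [diagonal_mul_diagonal]
      funext i
      simp [sq]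
    rw [this]
    simp only [Matrix.mul_assoc]
    congr 2
    rw [← Matrix.mul_assoc (star U) U, hUU', Matrix.one_mul]
  have h1 : A * A - c • 1 = U * diagonal (fun i => hA.eigenvalues i ^ 2 - c) * star U := by
    have hd : (diagonal (fun i => hA.eigenvalues i ^ 2 - c) : Matrix (Fin n) (Fin n) ℝ)
        = diagonal (fun i => hA.eigenvalues i ^ 2) - c • 1 := by
      rw [smul_one_eq_diagonal, ← diagonal_sub]
    rw [hd, Matrix.mul_sub, Matrix.sub_mul, ← hAA]
    congr 1
    rw [Matrix.mul_smul, Matrix.smul_mul, mul_one, hUU]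
  rw [h1, Matrix.star_eq_conjTranspose]
  exact (posSemidef_diagonal_iff.mpr fun i => sub_nonneg.mpr (hc i)).mul_mul_conjTranspose_same U

theorem stmt_8 {p s : ℕ} (P : Matrix (Fin p) (Fin p) ℝ)
    (Rn : Matrix (Fin s) (Fin s) ℝ) (D : Matrix (Fin s) (Fin p) ℝ)
    (hP : P.PosDef) (hRn : Rn.PosDef)
    (Ra : Matrix (Fin s) (Fin s) ℝ) (hRa : Ra = (D * P * Dᵀ + Rn)⁻¹)
    (hRaH : Ra.IsHermitian)
    (T : Matrix (Fin p) (Fin s) ℝ) (hT : T = P * Dᵀ * Ra) :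
    P.trace - (P - T * D * P).trace = (P * Dᵀ * Ra * D * P).trace ∧
    (⨅ i, hP.1.eigenvalues i) ^ 2 * (⨅ i, hRaH.eigenvalues i) * (∑ i, ∑ j, D i j ^ 2)
      ≤ (P * Dᵀ * Ra * D * P).trace ∧
    (D ≠ 0 → 0 < P.trace - (P - T * D * P).trace) := by
  have hPT : Pᵀ = P := hP.1
  have hDT : Dᴴ = Dᵀ := rfl
  -- Ra is positive definite
  have hRaPD : Ra.PosDef := by
    rw [hRa]
    apply Matrix.PosDef.inv
    have h1 : (D * P * Dᵀ).PosSemidef := by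
      have := hP.posSemidef.mul_mul_conjTranspose_same D
      rwa [hDT] at this
    exact Matrix.PosDef.posSemidef_add h1 hRn
  set c : ℝ := ⨅ i, hP.1.eigenvalues i with hc_def
  set d : ℝ := ⨅ i, hRaH.eigenvalues i with hd_def
  have hcle : ∀ i, c ≤ hP.1.eigenvalues i := fun i =>
    ciInf_le (Set.finite_range _).bddBelow i
  have hdle : ∀ i, d ≤ hRaH.eigenvalues i := fun i =>
    ciInf_le (Set.finite_range _).bddBelow i
  have hc0 : 0 ≤ c := Real.iInf_nonneg fun i => (hP.eigenvalues_pos i).le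
  have hd0 : 0 ≤ d := Real.iInf_nonneg fun i => (hRaPD.eigenvalues_pos i).le
  have hc2le : ∀ i, c ^ 2 ≤ hP.1.eigenvalues i ^ 2 := fun i =>
    pow_le_pow_left₀ hc0 (hcle i) 2
  -- main trace equality
  have hEq : P.trace - (P - T * D * P).trace = (P * Dᵀ * Ra * D * P).trace := by
    rw [Matrix.trace_sub, sub_sub_cancel, hT]
  -- step 2 : c^2 * ∑∑ D² ≤ tr(D * P * P * Dᵀ)
  have hS : (D * Dᵀ).trace = ∑ i, ∑ j, D i j ^ 2 := by
    simp [Matrix.trace, Matrix.mul_apply, Matrix.diag, sq]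
  have step2 : c ^ 2 * (∑ i, ∑ j, D i j ^ 2) ≤ (D * (P * P) * Dᵀ).trace := by
    have hpsd : (P * P - (c ^ 2) • 1).PosSemidef := mySqSubSmulOnePsd hP.1 hc2le
    have h := myPsdTraceNonneg (by simpa [hDT] using hpsd.mul_mul_conjTranspose_same D)
    have hexp : D * (P * P - (c ^ 2) • 1) * Dᵀ
        = D * (P * P) * Dᵀ - (c ^ 2) • (D * Dᵀ) := by
      rw [Matrix.mul_sub, Matrix.sub_mul]
      congr 1
      simp only [Matrix.mul_smul, Matrix.smul_mul, Matrix.mul_one, Matrix.one_mul]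
    rw [hexp, Matrix.trace_sub, Matrix.trace_smul, sub_nonneg, smul_eq_mul, hS] at h
    exact h
  -- step 1 : d * tr(Mᵀ M) ≤ tr(Mᵀ Ra M) with M = D * P
  set M : Matrix (Fin s) (Fin p) ℝ := D * P with hM_def
  have hMT : Mᴴ = P * Dᵀ := by
    rw [hM_def]
    show (D * P)ᵀ = P * Dᵀ
    rw [Matrix.transpose_mul, hPT]
  have hMM : (Mᴴ * M).trace = (D * (P * P) * Dᵀ).trace := by
    rw [Matrix.trace_mul_comm, hMT, hM_def]
    rw [show D * P * (P * Dᵀ) = D * (P * P) * Dᵀ by simp [Matrix.mul_assoc]]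
  have step1 : d * (Mᴴ * M).trace ≤ (Mᴴ * Ra * M).trace := by
    have hpsd : (Ra - d • 1).PosSemidef := mySubSmulOnePsd hRaH hdle
    have h := myPsdTraceNonneg (hpsd.conjTranspose_mul_mul_same M)
    have hexp : Mᴴ * (Ra - d • 1) * M = Mᴴ * Ra * M - d • (Mᴴ * M) := by
      rw [Matrix.mul_sub, Matrix.sub_mul]
      congr 1
      simp only [Matrix.mul_smul, Matrix.smul_mul, Matrix.mul_one, Matrix.one_mul]
    rw [hexp, Matrix.trace_sub, Matrix.trace_smul, sub_nonneg, smul_eq_mul] at h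
    exact h
  have hTrEq : (Mᴴ * Ra * M).trace = (P * Dᵀ * Ra * D * P).trace := by
    rw [hMT, hM_def, Matrix.mul_assoc (P * Dᵀ * Ra) D P]
  have hBound : c ^ 2 * d * (∑ i, ∑ j, D i j ^ 2) ≤ (P * Dᵀ * Ra * D * P).trace := by
    calc c ^ 2 * d * (∑ i, ∑ j, D i j ^ 2)
        = d * (c ^ 2 * (∑ i, ∑ j, D i j ^ 2)) := by ring
      _ ≤ d * (Mᴴ * M).trace := by
          apply mul_le_mul_of_nonneg_left _ hd0
          rw [hMM]; exact step2
      _ ≤ (Mᴴ * Ra * M).trace := step1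
      _ = (P * Dᵀ * Ra * D * P).trace := hTrEq
  refine ⟨hEq, hBound, fun hD => ?_⟩
  -- strict positivity
  obtain ⟨i0, j0, hij⟩ : ∃ i j, D i j ≠ 0 := by
    by_contra h
    push_neg at h
    exact hD (by ext i j; simp [h])
  haveI : Nonempty (Fin s) := ⟨i0⟩
  haveI : Nonempty (Fin p) := ⟨j0⟩
  have hSpos : 0 < ∑ i, ∑ j, D i j ^ 2 := by
    apply Finset.sum_pos'
    · intro i _; positivity
    · exact ⟨i0, Finset.mem_univ _, Finset.sum_pos'
        (fun j _ => sq_nonneg _) ⟨j0, Finset.mem_univ _, by positivity⟩⟩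
  have hcpos : 0 < c := by
    obtain ⟨i1, _, hi1⟩ := Finset.exists_min_image Finset.univ hP.1.eigenvalues
      ⟨Classical.arbitrary (Fin p), Finset.mem_univ _⟩
    exact lt_of_lt_of_le (hP.eigenvalues_pos i1)
      (le_ciInf fun j => hi1 j (Finset.mem_univ _))
  have hdpos : 0 < d := by
    obtain ⟨i1, _, hi1⟩ := Finset.exists_min_image Finset.univ hRaH.eigenvalues
      ⟨Classical.arbitrary (Fin s), Finset.mem_univ _⟩
    exact lt_of_lt_of_le (hRaPD.eigenvalues_pos i1)
      (le_ciInf fun j => hi1 j (Finset.mem_univ _))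
  rw [hEq]
  exact lt_of_lt_of_le (by positivity) hBound
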